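/- The quasi-shuffle product on words over a commutative semigroup Ω is associative. -/

import Mathlib

/-- The quasi-shuffle product of two words over a commutative semigroup `Ω`,
with values in the free `ℤ`-module spanned by words. -/
noncomputable def qsh {Ω : Type*} [AddCommSemigroup Ω] :
    List Ω → List Ω → (List Ω →₀ ℤ)
  | [], w => Finsupp.single w 1
  | a :: w', [] => Finsupp.single (a :: w') 1
  | a :: w', b :: w'' =>
      Finsupp.mapDomain (a :: ·) (qsh w' (b :: w''))
    + Finsupp.mapDomain (b :: ·) (qsh (a :: w') w'')
    + Finsupp.mapDomain ((a + b) :: ·) (qsh w' w'')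
  termination_by w₁ w₂ => w₁.length + w₂.length

section Aux

variable {Ω : Type*} [AddCommSemigroup Ω]

/-- `a :: ·` on words, as a linear map on the free module. -/
noncomputable def lA (a : Ω) : (List Ω →₀ ℤ) →ₗ[ℤ] (List Ω →₀ ℤ) :=
  Finsupp.lmapDomain ℤ ℤ (a :: ·)

/-- Basis vector of a word. -/
noncomputable def S (l : List Ω) : List Ω →₀ ℤ := Finsupp.single l 1

omit [AddCommSemigroup Ω] in
lemma lA_single (a : Ω) (x : List Ω) (c : ℤ) :
    lA a (Finsupp.single x c) = Finsupp.single (a :: x) c := by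
  simp [lA, Finsupp.mapDomain_single]

omit [AddCommSemigroup Ω] in
lemma lA_S (a : Ω) (x : List Ω) : lA a (S x) = S (a :: x) := lA_single a x 1

lemma qsh_nil_left (v : List Ω) : qsh [] v = S v := by rw [qsh]; rfl

lemma qsh_nil_right (u : List Ω) : qsh u [] = S u := by cases u <;> (rw [qsh]; rfl)

lemma qsh_cons (a b : Ω) (u v : List Ω) :
    qsh (a :: u) (b :: v) =
      lA a (qsh u (b :: v)) + lA b (qsh (a :: u) v) + lA (a + b) (qsh u v) := by
  rw [qsh]; rfl

/-- The bilinear extension of `qsh`. -/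
noncomputable def Q : (List Ω →₀ ℤ) →ₗ[ℤ] (List Ω →₀ ℤ) →ₗ[ℤ] (List Ω →₀ ℤ) :=
  Finsupp.lsum ℤ fun x => LinearMap.toSpanSingleton ℤ _
    (Finsupp.lsum ℤ fun y => LinearMap.toSpanSingleton ℤ _ (qsh x y))

lemma Q_single (x y : List Ω) (c d : ℤ) :
    Q (Finsupp.single x c) (Finsupp.single y d) = (c * d) • qsh x y := by
  simp [Q, LinearMap.toSpanSingleton_apply, smul_smul, mul_comm]

lemma Q_SS (x y : List Ω) : Q (S x) (S y) = qsh x y := by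
  rw [S, S, Q_single, one_mul, one_smul]

lemma Q_f_single (f : List Ω →₀ ℤ) (w : List Ω) :
    Q f (Finsupp.single w 1) = f.sum fun x c => c • qsh x w := by
  simp [Q, LinearMap.toSpanSingleton_apply, Finsupp.sum_apply, Finsupp.lsum_apply]

lemma Q_single_g (u : List Ω) (g : List Ω →₀ ℤ) :
    Q (Finsupp.single u 1) g = g.sum fun y d => d • qsh u y := by
  have : Q (Finsupp.single u (1:ℤ)) = Finsupp.lsum ℤ fun y =>
      LinearMap.toSpanSingleton ℤ _ (qsh u y) := by
    simp [Q]
  rw [this, Finsupp.lsum_apply]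
  exact Finsupp.sum_congr fun y _ => rfl

lemma Q_nil_left (g : List Ω →₀ ℤ) : Q (S ([] : List Ω)) g = g := by
  rw [S, Q_single_g]
  simp only [qsh_nil_left, S]
  rw [show (fun (y : List Ω) (d : ℤ) => d • Finsupp.single y (1:ℤ)) = Finsupp.single from ?_,
    Finsupp.sum_single]
  funext y d; rw [Finsupp.smul_single, smul_eq_mul, mul_one]

lemma Q_nil_right (f : List Ω →₀ ℤ) : Q f (S ([] : List Ω)) = f := by
  rw [S, Q_f_single]
  simp only [qsh_nil_right, S]
  rw [show (fun (x : List Ω) (c : ℤ) => c • Finsupp.single x (1:ℤ)) = Finsupp.single from ?_,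
    Finsupp.sum_single]
  funext y d; rw [Finsupp.smul_single, smul_eq_mul, mul_one]

lemma Qcons (a b : Ω) (f g : List Ω →₀ ℤ) :
    Q (lA a f) (lA b g) =
      lA a (Q f (lA b g)) + lA b (Q (lA a f) g) + lA (a + b) (Q f g) := by
  induction f using Finsupp.induction_linear generalizing g with
  | zero => simp
  | add f₁ f₂ h1 h2 =>
      simp only [map_add, LinearMap.add_apply, h1, h2]; abel
  | single x c =>
      induction g using Finsupp.induction_linear with
      | zero => simp
      | add g₁ g₂ h1 h2 =>
          simp only [map_add, LinearMap.add_apply, map_add, h1, h2]; abel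
      | single y d =>
          rw [lA_single, lA_single, Q_single, Q_single, Q_single, Q_single,
            qsh_cons, map_smul, map_smul, map_smul]
          rw [smul_add, smul_add]

lemma QconsR (a c : Ω) (f : List Ω →₀ ℤ) (w' : List Ω) :
    Q (lA a f) (S (c :: w')) =
      lA a (Q f (S (c :: w'))) + lA c (Q (lA a f) (S w'))
      + lA (a + c) (Q f (S w')) := by
  rw [← lA_S c w', Qcons]

lemma QconsL (a b : Ω) (u' : List Ω) (g : List Ω →₀ ℤ) :
    Q (S (a :: u')) (lA b g) =
      lA a (Q (S u') (lA b g)) + lA b (Q (S (a :: u')) g)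
      + lA (a + b) (Q (S u') g) := by
  rw [← lA_S a u', Qcons]

lemma key (u v w : List Ω) : Q (qsh u v) (S w) = Q (S u) (qsh v w) := by
  match u, v, w with
  | [], v, w =>
      rw [qsh_nil_left v, Q_SS, Q_nil_left]
  | (a :: u'), v, [] =>
      rw [qsh_nil_right v, Q_nil_right, Q_SS]
  | (a :: u'), [], (c :: w') =>
      rw [qsh_nil_right (a :: u'), qsh_nil_left (c :: w'), Q_SS]
  | (a :: u'), (b :: v'), (c :: w') =>
      have IH1 := key u' (b :: v') (c :: w')
      have IH2 := key (a :: u') v' (c :: w')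
      have IH3 := key u' v' (c :: w')
      have IH4 := key (a :: u') (b :: v') w'
      have IH5 := key u' (b :: v') w'
      have IH6 := key (a :: u') v' w'
      have IH7 := key u' v' w'
      have hc : lA c (Q (lA a (qsh u' (b :: v'))) (S w'))
            + lA c (Q (lA b (qsh (a :: u') v')) (S w'))
            + lA c (Q (lA (a + b) (qsh u' v')) (S w'))
          = lA c (Q (S (a :: u')) (qsh (b :: v') w')) := by
        rw [← IH4, qsh_cons a b u' v']
        simp only [map_add, LinearMap.add_apply]
      have ha : lA a (Q (S u') (lA b (qsh v' (c :: w'))))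
            + lA a (Q (S u') (lA c (qsh (b :: v') w')))
            + lA a (Q (S u') (lA (b + c) (qsh v' w')))
          = lA a (Q (S u') (qsh (b :: v') (c :: w'))) := by
        rw [qsh_cons b c v' w']
        simp only [map_add]
      rw [qsh_cons a b u' v']
      simp only [map_add, LinearMap.add_apply]
      rw [QconsR a c, QconsR b c, QconsR (a + b) c]
      rw [qsh_cons b c v' w']
      simp only [map_add]
      rw [QconsL a b, QconsL a c, QconsL a (b + c)]
      rw [IH1, IH2, IH3, IH5, IH6, IH7]
      rw [← ha, ← hc]
      rw [show a + (b + c) = a + b + c from (add_assoc a b c).symm]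
      abel
termination_by u.length + v.length + w.length


end Aux

/-- the quasi-shuffle product is associative (after extending it
bilinearly to the free module spanned by words). -/
theorem qsh_assoc {Ω : Type*} [AddCommSemigroup Ω] (u v w : List Ω) :
    (qsh u v).sum (fun x c => c • qsh x w) =
      (qsh v w).sum (fun x c => c • qsh u x) := by
  have h := key u v w
  rw [S, S, Q_f_single, Q_single_g] at h
  exact h
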